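/- Let G be a graph with a k-strategy H with respect to K_3. If v is a vertex with neighborhood N in G, and |N| + 1 ≤ k − 3, then possibly after restricting, the set {h restricted to N : h ∈ H, v ∈ dom(h)} induces a 3-strategy on G restricted to N with respect to K_2 (fixing the color of v), and hence G restricted to N ∪ {v} is 3-colorable provided G restricted to N contains no odd cycle obstruction; in particular, if G → K_3 then the neighborhood of any vertex is 2-colorable. -/

import Mathlib

/-- `H` is a `k`-strategy on the graph `G` and the complete graph `K_q`. -/
def IsStrategy {V : Type*} (G : SimpleGraph V) (q k : ℕ)
    (H : Set (V → Option (Fin q))) : Prop :=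
  H.Nonempty ∧
  (∀ h ∈ H, ∀ u v : V, G.Adj u v →
    ∀ a b : Fin q, h u = some a → h v = some b → a ≠ b) ∧
  (∀ h ∈ H, {v | h v ≠ none}.Finite ∧ {v | h v ≠ none}.ncard ≤ k) ∧
  (∀ h ∈ H, ∀ h' : V → Option (Fin q),
    (∀ v, h' v = h v ∨ h' v = none) → h' ∈ H) ∧
  (∀ h ∈ H, {v | h v ≠ none}.ncard < k → ∀ x, h x = none →
    ∃ h' ∈ H, (∀ v, v ≠ x → h' v = h v) ∧ h' x ≠ none)

open Classical in
lemma strategy_extend {V : Type*} {G : SimpleGraph V} {q k : ℕ}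
    {H : Set (V → Option (Fin q))} (hH : IsStrategy G q k H) :
    ∀ S : Finset V, S.card ≤ k → ∃ h ∈ H, ∀ x ∈ S, h x ≠ none := by
  obtain ⟨⟨h₀, hh₀⟩, _, _, hclosed, hext⟩ := hH
  intro S
  induction S using Finset.induction with
  | empty => exact fun _ => ⟨fun _ => none, hclosed h₀ hh₀ _ (fun _ => Or.inr rfl),
      fun x hx => absurd hx (by simp)⟩
  | @insert x S hxS ih =>
    intro hcard
    rw [Finset.card_insert_of_notMem hxS] at hcard
    obtain ⟨h, hh, hS⟩ := ih (by omega)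
    set h' : V → Option (Fin q) := fun w => if w ∈ S then h w else none with hh'def
    have hh' : h' ∈ H := hclosed h hh h' (fun w => by
      by_cases hw : w ∈ S <;> simp [hh'def, hw])
    have hsupp : {w | h' w ≠ none} ⊆ ↑S := by
      intro w hw
      by_contra hws
      have hwS : w ∉ S := fun h => hws (Finset.mem_coe.mpr h)
      simp [hh'def, hwS] at hw
    have hlt : {w | h' w ≠ none}.ncard < k := by
      have := Set.ncard_le_ncard hsupp S.finite_toSet
      rw [Set.ncard_coe_finset] at this
      omega
    have hx' : h' x = none := by simp [hh'def, hxS]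
    obtain ⟨h'', hh'', hagree, hx''⟩ := hext h' hh' hlt x hx'
    refine ⟨h'', hh'', fun w hw => ?_⟩
    rcases Finset.mem_insert.mp hw with rfl | hwS
    · exact hx''
    · rw [hagree w (fun h => hxS (h ▸ hwS))]
      simp only [hh'def, if_pos hwS]
      exact hS w hwS

lemma fin3_key : ∀ b a1 a2 : Fin 3, a1 ≠ b → a2 ≠ b → a1 ≠ a2 →
    (if a1 = b + 1 then (0 : Fin 2) else 1) ≠ (if a2 = b + 1 then 0 else 1) := by
  decide

theorem neighborhood_two_colorable {V : Type*} [Fintype V]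
    (G : SimpleGraph V) (v : V) (k : ℕ) :
    ((∃ H : Set (V → Option (Fin 3)), IsStrategy G 3 k H) →
      (G.neighborSet v).ncard + 1 ≤ k - 3 →
      ∃ H' : Set (↥(G.neighborSet v) → Option (Fin 2)),
        IsStrategy (G.induce (G.neighborSet v)) 2 3 H') ∧
    ((G.induce (G.neighborSet v)).Colorable 2 →
      (G.induce (insert v (G.neighborSet v))).Colorable 3) ∧
    (G.Colorable 3 → (G.induce (G.neighborSet v)).Colorable 2) := by
  classical
  set N := G.neighborSet v with hN
  refine ⟨?_, ?_, ?_⟩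
  · -- part 1
    rintro ⟨H, hH⟩ hk
    -- build a partial coloring defined on insert v N
    have hNfin : N.Finite := Set.toFinite N
    set S : Finset V := insert v hNfin.toFinset with hSdef
    have hScard : S.card ≤ k := by
      have h1 : S.card ≤ hNfin.toFinset.card + 1 := Finset.card_insert_le _ _
      have h2 : hNfin.toFinset.card = N.ncard := (Set.ncard_eq_toFinset_card N hNfin).symm
      omega
    obtain ⟨h, hh, hS⟩ := strategy_extend hH S hScard
    have hv : h v ≠ none := hS v (by simp [hSdef])
    obtain ⟨b, hb⟩ := Option.ne_none_iff_exists'.mp hv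
    have hmem : ∀ x : ↥N, ∃ a : Fin 3, h ↑x = some a := fun x =>
      Option.ne_none_iff_exists'.mp (hS ↑x (by simp only [hSdef, Finset.mem_insert, hNfin.mem_toFinset]; exact Or.inr x.2))
    choose a ha using hmem
    have haneb : ∀ x : ↥N, a x ≠ b := fun x =>
      hH.2.1 h hh ↑x v (G.adj_symm x.2) (a x) b (ha x) hb
    -- the 2-coloring of the neighborhood
    set c : ↥N → Fin 2 := fun x => if a x = b + 1 then 0 else 1 with hcdef
    have hcproper : ∀ x y : ↥N, (G.induce N).Adj x y → c x ≠ c y := by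
      intro x y hxy
      have hadj : G.Adj ↑x ↑y := hxy
      exact fin3_key b (a x) (a y) (haneb x) (haneb y)
        (hH.2.1 h hh ↑x ↑y hadj (a x) (a y) (ha x) (ha y))
    -- the strategy: partial restrictions of c with support at most 3
    refine ⟨{g | (∀ x, g x = some (c x) ∨ g x = none) ∧ {x | g x ≠ none}.ncard ≤ 3},
      ⟨fun _ => none, fun _ => Or.inr rfl, by simp⟩, ?_, ?_, ?_, ?_⟩
    · rintro g ⟨hg, -⟩ x y hxy p q hp hq
      rcases hg x with hx | hx
      · rcases hg y with hy | hy
        · rw [hx] at hp; rw [hy] at hq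
          obtain rfl : p = c x := by injection hp.symm
          obtain rfl : q = c y := by injection hq.symm
          exact hcproper x y hxy
        · rw [hy] at hq; exact absurd hq (by simp)
      · rw [hx] at hp; exact absurd hp (by simp)
    · rintro g ⟨-, hg⟩
      exact ⟨Set.toFinite _, hg⟩
    · rintro g ⟨hg1, hg2⟩ g' hg'
      refine ⟨fun x => ?_, ?_⟩
      · rcases hg' x with hx | hx
        · rw [hx]; exact hg1 x
        · exact Or.inr hx
      · refine le_trans (Set.ncard_le_ncard ?_ (Set.toFinite _)) hg2
        intro x hx
        rcases hg' x with h1 | h1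
        · simpa [h1] using hx
        · exact absurd h1 hx
    · rintro g ⟨hg1, hg2⟩ hlt x hx
      refine ⟨Function.update g x (some (c x)), ⟨fun w => ?_, ?_⟩, fun w hw => ?_, ?_⟩
      · rcases eq_or_ne w x with rfl | hwx
        · simp
        · rw [Function.update_of_ne hwx]; exact hg1 w
      · have hsub : {w | Function.update g x (some (c x)) w ≠ none} ⊆
            insert x {w | g w ≠ none} := by
          intro w hw
          rcases eq_or_ne w x with rfl | hwx
          · exact Set.mem_insert _ _
          · refine Set.mem_insert_of_mem _ ?_
            simpa [Function.update_of_ne hwx] using hw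
        exact (Set.ncard_le_ncard hsub ((Set.toFinite _).insert x)).trans
          ((Set.ncard_insert_le x _).trans (by omega))
      · exact Function.update_of_ne hw _ _
      · simp
  · -- part 2
    intro hc2
    obtain ⟨c⟩ := hc2
    refine ⟨SimpleGraph.Coloring.mk
      (fun x => if hx : (x : V) ∈ N then (c ⟨x, hx⟩).castSucc else 2) ?_⟩
    rintro ⟨x, hx⟩ ⟨y, hy⟩ hxy
    have hadj : G.Adj x y := hxy
    by_cases hxN : x ∈ N <;> by_cases hyN : y ∈ N
    · simp only [hxN, hyN, dif_pos]
      intro heq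
      exact c.valid (by exact hadj : (G.induce N).Adj ⟨x, hxN⟩ ⟨y, hyN⟩)
        (Fin.castSucc_injective _ heq)
    · have hyv : y = v := by
        rcases Set.mem_insert_iff.mp hy with h1 | h1
        · exact h1
        · exact absurd h1 hyN
      simp only [hxN, dif_pos, hyN, dif_neg]
      have : ∀ p : Fin 2, p.castSucc ≠ 2 := by decide
      exact this _
    · have hxv : x = v := by
        rcases Set.mem_insert_iff.mp hx with h1 | h1
        · exact h1
        · exact absurd h1 hxN
      simp only [hxN, dif_neg, hyN, dif_pos]
      have : ∀ p : Fin 2, (2 : Fin 3) ≠ p.castSucc := by decide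
      exact this _
    · have hxv : x = v := by
        rcases Set.mem_insert_iff.mp hx with h1 | h1
        · exact h1
        · exact absurd h1 hxN
      have hyv : y = v := by
        rcases Set.mem_insert_iff.mp hy with h1 | h1
        · exact h1
        · exact absurd h1 hyN
      rw [hxv, hyv] at hadj
      exact absurd hadj (G.loopless.irrefl v)
  · -- part 3
    intro hc3
    obtain ⟨c⟩ := hc3
    refine ⟨SimpleGraph.Coloring.mk
      (fun x => if c (x : V) = c v + 1 then 0 else 1) ?_⟩
    rintro ⟨x, hx⟩ ⟨y, hy⟩ hxy
    have hadj : G.Adj x y := hxy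
    exact fin3_key (c v) (c x) (c y)
      (fun h => c.valid hx h.symm)
      (fun h => c.valid hy h.symm)
      (c.valid hadj)
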